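/- Let S = {x_1,...,x_{3c}} be a multiset of positive integers summing to cw, let n = Σ x_i, and let G be the complete c-partite graph in which each of the c parts has exactly 3n + w vertices. Then G admits a proper coloring with 3c colors where color i is used at most n + x_i times, if and only if S can be partitioned into c triples each summing to w. -/

import Mathlib

open Finset

/-- The fiber of the first projection of a sigma type is equivalent to the component. -/
def sigmaFstFiberEquiv {α : Type*} {β : α → Type*} (a : α) :
    {s : Σ i, β i // s.1 = a} ≃ β a where
  toFun s := s.prop ▸ s.val.2
  invFun b := ⟨⟨a, b⟩, rfl⟩
  left_inv := by rintro ⟨⟨i, b⟩, rfl⟩; rfl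
  right_inv b := rfl

theorem stmt4 (c w : ℕ) (hc : 0 < c) (x : Fin (3 * c) → ℕ) (hx : ∀ i, 0 < x i)
    (n : ℕ) (hn : n = ∑ i, x i) (hw : n = c * w) :
    (∃ φ : Fin c × Fin (3 * n + w) → Fin (3 * c),
       (∀ p q : Fin c × Fin (3 * n + w), p.1 ≠ q.1 → φ p ≠ φ q) ∧
       (∀ i, (univ.filter fun p => φ p = i).card ≤ n + x i)) ↔
    (∃ T : Fin (3 * c) → Fin c,
       ∀ j, (univ.filter fun i => T i = j).card = 3 ∧
         (∑ i ∈ univ.filter fun i => T i = j, x i) = w) := by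
  have hn_pos : 0 < n := by
    rw [hn]
    exact Finset.sum_pos (fun i _ => hx i) ⟨⟨0, by omega⟩, mem_univ _⟩
  have hw_pos : 0 < w := by
    rcases Nat.eq_zero_or_pos w with h | h
    · subst h; simp at hw; omega
    · exact h
  have hwn : w ≤ c * w := Nat.le_mul_of_pos_left w hc
  constructor
  · rintro ⟨φ, hφ1, hφ2⟩
    -- total count forces each color class to have card exactly n + x i
    have hsum : ∑ i, (univ.filter fun p => φ p = i).card = c * (3 * n + w) := by
      rw [← Finset.card_eq_sum_card_fiberwise (fun p _ => mem_univ (φ p))]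
      simp [Finset.card_univ]
    have htot : ∑ i : Fin (3 * c), (n + x i) = c * (3 * n + w) := by
      have h1 : ∑ i : Fin (3 * c), (n + x i) = 3 * c * n + n := by
        rw [Finset.sum_add_distrib, Finset.sum_const, card_univ, Fintype.card_fin,
          smul_eq_mul, ← hn]
      have h2 : c * (3 * n + w) = 3 * c * n + c * w := by ring
      rw [h1, h2, ← hw]
    have heq : ∀ i, (univ.filter fun p => φ p = i).card = n + x i := by
      have := (Finset.sum_eq_sum_iff_of_le (fun i _ => hφ2 i)).mp (hsum.trans htot.symm)
      exact fun i => this i (mem_univ i)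
    have hne : ∀ i, (univ.filter fun p => φ p = i).Nonempty := by
      intro i
      apply Finset.card_pos.mp
      rw [heq i]; omega
    set T : Fin (3 * c) → Fin c := fun i => (hne i).choose.1 with hTdef
    have hpart_of : ∀ i (p : Fin c × Fin (3 * n + w)), φ p = i → p.1 = T i := by
      intro i p hp
      have hq := (hne i).choose_spec
      rw [mem_filter] at hq
      by_contra h
      exact hφ1 p (hne i).choose h (by rw [hp, hq.2])
    have hpart : ∀ j, (univ.filter fun p : Fin c × Fin (3 * n + w) => p.1 = j).card
        = 3 * n + w := by
      intro j
      have : (univ.filter fun p : Fin c × Fin (3 * n + w) => p.1 = j) = {j} ×ˢ univ := by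
        ext p
        simp only [mem_filter, mem_univ, true_and, Finset.mem_product, mem_singleton,
          and_true]
      rw [this, card_product, card_singleton, card_univ, Fintype.card_fin, one_mul]
    have hfib : ∀ j, (univ.filter fun p : Fin c × Fin (3 * n + w) => p.1 = j).card
        = ∑ i ∈ univ.filter (fun i => T i = j), (n + x i) := by
      intro j
      rw [Finset.card_eq_sum_card_fiberwise
        (f := φ) (t := univ.filter fun i => T i = j)
        (fun p hp => by
          rw [Finset.mem_coe, mem_filter] at hp ⊢
          exact ⟨mem_univ _, by rw [← (hpart_of (φ p) p rfl), hp.2]⟩)]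
      apply Finset.sum_congr rfl
      intro i hi
      rw [← heq i]
      congr 1
      ext p
      simp only [mem_filter, mem_univ, true_and]
      constructor
      · rintro ⟨_, h2⟩; exact h2
      · intro h2
        refine ⟨?_, h2⟩
        rw [hpart_of i p h2]
        exact (mem_filter.mp hi).2
    refine ⟨T, fun j => ?_⟩
    have h1 : (univ.filter fun i => T i = j).card * n
        + (∑ i ∈ univ.filter (fun i => T i = j), x i) = 3 * n + w := by
      have := (hpart j).symm.trans (hfib j)
      rw [Finset.sum_add_distrib, Finset.sum_const, smul_eq_mul] at this
      omega
    have hks : (univ.filter fun i => T i = j).card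
        ≤ ∑ i ∈ univ.filter (fun i => T i = j), x i := by
      calc (univ.filter fun i => T i = j).card
          = ∑ _i ∈ univ.filter (fun i => T i = j), 1 := by simp
        _ ≤ ∑ i ∈ univ.filter (fun i => T i = j), x i :=
            Finset.sum_le_sum (fun i _ => hx i)
    have hsn : (∑ i ∈ univ.filter (fun i => T i = j), x i) ≤ n := by
      rw [hn]
      exact Finset.sum_le_sum_of_subset (filter_subset _ _)
    set k := (univ.filter fun i => T i = j).card with hk
    set s := ∑ i ∈ univ.filter (fun i => T i = j), x i with hs
    have hwn' : w ≤ n := hw ▸ hwn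
    have hk4 : k ≤ 4 := by
      by_contra hcon
      push_neg at hcon
      have h5 : 5 * n ≤ k * n := Nat.mul_le_mul_right n (by omega)
      set m := k * n with hm
      omega
    interval_cases k <;> omega
  · rintro ⟨T, hT⟩
    have hcards : ∀ j, Fintype.card (Σ i : {i // T i = j}, Fin (n + x i.1)) = 3 * n + w := by
      intro j
      rw [Fintype.card_sigma]
      simp only [Fintype.card_fin]
      rw [← Finset.sum_subtype (univ.filter fun i => T i = j) (by simp) (fun i => n + x i)]
      rw [Finset.sum_add_distrib, Finset.sum_const, smul_eq_mul, (hT j).1, (hT j).2]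
    set e : ∀ j : Fin c, Fin (3 * n + w) ≃ Σ i : {i // T i = j}, Fin (n + x i.1) :=
      fun j => Fintype.equivOfCardEq ((Fintype.card_fin _).trans (hcards j).symm) with he
    refine ⟨fun p => ((e p.1 p.2).1 : {i // T i = p.1}).1, ?_, ?_⟩
    · intro p q hpq hcon
      simp only at hcon
      exact hpq (by rw [← (e p.1 p.2).1.2, ← (e q.1 q.2).1.2, hcon])
    · intro i
      have hTφ : ∀ p : Fin c × Fin (3 * n + w),
          T ((e p.1 p.2).1 : {i // T i = p.1}).1 = p.1 := fun p => (e p.1 p.2).1.2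
      have himg : (univ.filter fun p : Fin c × Fin (3 * n + w) =>
            ((e p.1 p.2).1 : {i' // T i' = p.1}).1 = i)
          = (univ.filter fun v : Fin (3 * n + w) =>
              ((e (T i) v).1 : {i' // T i' = T i}).1 = i).image (fun v => (T i, v)) := by
        ext p
        simp only [mem_filter, mem_univ, true_and, mem_image]
        constructor
        · intro hp
          have h1 : p.1 = T i := by rw [← hp]; exact (hTφ p).symm
          refine ⟨p.2, ?_, ?_⟩
          · have h2 := hp
            rw [h1] at h2
            exact h2
          · rw [← h1]
        · rintro ⟨v, hv, rfl⟩
          exact hv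
      rw [himg, Finset.card_image_of_injective _ (fun a b hab => by
        simpa using congrArg Prod.snd hab)]
      have : (univ.filter fun v : Fin (3 * n + w) =>
          ((e (T i) v).1 : {i' // T i' = T i}).1 = i).card = n + x i := by
        have hcond : ∀ v : Fin (3 * n + w),
            (((e (T i) v).1 : {i' // T i' = T i}).1 = i
              ↔ (e (T i) v).1 = (⟨i, rfl⟩ : {i' // T i' = T i})) := by
          intro v
          rw [Subtype.ext_iff]
        rw [← Fintype.card_subtype]
        have e2 : {v : Fin (3 * n + w) // ((e (T i) v).1 : {i' // T i' = T i}).1 = i}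
            ≃ {s : Σ i' : {i' // T i' = T i}, Fin (n + x i'.1) //
                s.1 = (⟨i, rfl⟩ : {i' // T i' = T i})} :=
          (Equiv.subtypeEquiv (e (T i)) (fun v => by rw [hcond v])).trans
            (Equiv.refl _)
        rw [Fintype.card_congr (e2.trans (sigmaFstFiberEquiv _)), Fintype.card_fin]
      rw [this]
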